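/- Let G be a simple graph on a vertex type V and E : V → V → ℝ a matrix with E i j = 0 whenever i and j are not adjacent in G. Then E satisfies the additive no-arbitrage condition over all closed walks (for every closed walk v₀, v₁, …, v_t = v₀ in G, ∑_{i<t} E v_i v_{i+1} = 0) if and only if E i j = -E j i for all adjacent i, j and the sum ∑_{i<t} E v_i v_{i+1} vanishes over every cycle (closed walk with no repeated edges and no repeated vertices other than the endpoint) in G. -/

import Mathlib

/-- The sum of `E` over the consecutive edge steps of a walk `w` in `G`:
`∑_{i < length w} E v_i v_{i+1}`. -/
def walkSum {V : Type*} {G : SimpleGraph V} (E : V → V → ℝ) {u v : V} (w : G.Walk u v) : ℝ :=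
  ∑ i ∈ Finset.range w.length, E (w.getVert i) (w.getVert (i + 1))

/-- `E` is an additive no-arbitrage matrix over `G`: it vanishes on non-adjacent pairs and
its sum over the steps of every closed walk is zero. -/
def IsNoArbitrage {V : Type*} (G : SimpleGraph V) (E : V → V → ℝ) : Prop :=
  (∀ i j, ¬ G.Adj i j → E i j = 0) ∧ ∀ (v : V) (w : G.Walk v v), walkSum E w = 0

open SimpleGraph Walk in
lemma walkSum_nil {V : Type*} {G : SimpleGraph V} (E : V → V → ℝ) (v : V) :
    walkSum E (Walk.nil : G.Walk v v) = 0 := by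
  simp [walkSum]

open SimpleGraph Walk in
lemma walkSum_cons {V : Type*} {G : SimpleGraph V} (E : V → V → ℝ) {u x v : V}
    (h : G.Adj u x) (p : G.Walk x v) :
    walkSum E (Walk.cons h p) = E u x + walkSum E p := by
  unfold walkSum
  rw [Walk.length_cons, Finset.sum_range_succ']
  simp only [Walk.getVert_cons_succ, Walk.getVert_zero]
  exact add_comm _ _

open SimpleGraph Walk in
lemma walkSum_eq_darts {V : Type*} {G : SimpleGraph V} (E : V → V → ℝ) {u v : V}
    (w : G.Walk u v) :
    walkSum E w = (w.darts.map (fun d => E d.toProd.1 d.toProd.2)).sum := by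
  induction w with
  | nil => simp [walkSum_nil]
  | cons h p ih => rw [walkSum_cons, Walk.darts_cons, List.map_cons, List.sum_cons, ih]

open SimpleGraph Walk in
lemma walkSum_append {V : Type*} {G : SimpleGraph V} (E : V → V → ℝ) {u v x : V}
    (p : G.Walk u v) (q : G.Walk v x) :
    walkSum E (p.append q) = walkSum E p + walkSum E q := by
  simp [walkSum_eq_darts, Walk.darts_append]

open SimpleGraph Walk in
lemma walkSum_rotate {V : Type*} [DecidableEq V] {G : SimpleGraph V} (E : V → V → ℝ) {u v : V}
    (c : G.Walk v v) (h : u ∈ c.support) :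
    walkSum E (c.rotate u h) = walkSum E c := by
  rw [walkSum_eq_darts, walkSum_eq_darts]
  exact (((c.rotate_darts u h).map _).perm).sum_eq

open SimpleGraph Walk in
lemma walkSum_zero_of_closed {V : Type*} {G : SimpleGraph V} (E : V → V → ℝ)
    (hA : ∀ i j, G.Adj i j → E i j = - E j i)
    (hC : ∀ (v : V) (w : G.Walk v v), w.IsCycle → walkSum E w = 0) :
    ∀ (n : ℕ) (v : V) (w : G.Walk v v), w.length = n → walkSum E w = 0 := by
  classical
  intro n
  induction n using Nat.strong_induction_on with
  | _ n ih =>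
    intro v w hn
    rcases Nat.eq_zero_or_pos n with h0 | hpos
    · subst h0
      simp [walkSum, hn]
    by_cases hd : w.support.tail.Nodup
    · -- no repeated vertex in the tail: small cases or a genuine cycle
      cases w with
      | nil => simp [walkSum_nil]
      | @cons _ x _ h' q =>
        cases q with
        | nil => exact absurd h' G.irrefl
        | @cons _ y _ h'' r =>
          cases r with
          | nil =>
            -- length-2 closed walk: v → x → v
            rw [walkSum_cons, walkSum_cons, walkSum_nil, hA v x h']
            ring
          | @cons _ z _ h''' s =>
            -- length ≥ 3 and nodup tail: it's a cycle
            have hq : (Walk.cons h'' (Walk.cons h''' s)).IsPath := by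
              apply Walk.IsPath.mk'
              simpa [Walk.support_cons] using hd
            have hne : ¬ s(v, x) ∈ (Walk.cons h'' (Walk.cons h''' s)).edges := by
              intro hmem
              rw [Walk.edges_cons, List.mem_cons] at hmem
              rcases hmem with hmem | hmem
              · rw [Sym2.eq_iff] at hmem
                rcases hmem with ⟨hvx, _⟩ | ⟨hvy, hxx⟩
                · exact h'.ne hvx
                · -- y = v, so the path cons h''' s : Walk y v is a closed path, must be nil
                  subst hvy
                  have hpath : (Walk.cons h''' s).IsPath := hq.of_cons
                  rw [Walk.isPath_iff_eq_nil] at hpath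
                  simp at hpath
              · have : x ∈ (Walk.cons h''' s).support :=
                  Walk.snd_mem_support_of_mem_edges _ hmem
                have hnodup := hq.support_nodup
                rw [Walk.support_cons, List.nodup_cons] at hnodup
                exact hnodup.1 this
            have hcyc : (Walk.cons h' (Walk.cons h'' (Walk.cons h''' s))).IsCycle :=
              (Walk.cons_isCycle_iff _ h').mpr ⟨hq, hne⟩
            exact hC v _ hcyc
    · -- some vertex u is duplicated in the tail: rotate and split
      obtain ⟨u, hu⟩ := List.exists_duplicate_iff_not_nodup.mpr hd
      have hus : u ∈ w.support := List.mem_of_mem_tail hu.mem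
      have hcount : 2 ≤ (w.rotate u hus).support.tail.count u := by
        rw [List.Perm.count_eq ((w.support_rotate u hus).perm)]
        exact List.duplicate_iff_two_le_count.mp hu
      have hlenrot : (w.rotate u hus).length = w.length := by
        have h1 := congrArg Walk.length (w.take_spec hus)
        simp only [Walk.length_append] at h1
        simp only [Walk.rotate, Walk.length_append]
        omega
      have hsum : walkSum E (w.rotate u hus) = walkSum E w := walkSum_rotate E w hus
      -- the rotated walk starts at u and has u in its interior
      set w' := w.rotate u hus with hw'
      cases hw'' : w' with
      | nil =>
        exfalso
        have := hlenrot
        rw [hw''] at this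
        simp at this
        omega
      | @cons _ x _ h₁ q₁ =>
        have huq : u ∈ q₁.support := q₁.end_mem_support
        have hspec := q₁.take_spec huq
        have hcnt1 : (q₁.takeUntil u huq).support.count u = 1 :=
          q₁.count_support_takeUntil_eq_one huq
        have hcntq : 2 ≤ q₁.support.count u := by
          have : w'.support.tail = q₁.support := by rw [hw'']; simp [Walk.support_cons]
          rw [← this]; exact hcount
      -- lengths
        have hlen : (q₁.takeUntil u huq).length + (q₁.dropUntil u huq).length = q₁.length := by
          have h2 := congrArg Walk.length hspec
          rw [Walk.length_append] at h2
          exact h2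
        have hlenw' : w'.length = n := by rw [hlenrot, hn]
        have hlenq : q₁.length + 1 = n := by
          rw [hw''] at hlenw'; simp [Walk.length_cons] at hlenw'; omega
        have hdrop_pos : 1 ≤ (q₁.dropUntil u huq).length := by
          rcases Nat.eq_zero_or_pos (q₁.dropUntil u huq).length with hz | hz
          · exfalso
            have hnil : q₁.dropUntil u huq = Walk.nil :=
              (Walk.nil_iff_length_eq.mpr hz).eq_nil
            have : q₁.support.count u = 1 := by
              rw [← hspec, hnil]
              simpa using hcnt1
            omega
          · exact hz
        -- split the sum
        have hsplit : walkSum E w' =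
            walkSum E (Walk.cons h₁ (q₁.takeUntil u huq)) + walkSum E (q₁.dropUntil u huq) := by
          rw [hw'']
          conv_lhs => rw [← hspec]
          rw [walkSum_cons, walkSum_append, walkSum_cons]
          ring
        have h1 : walkSum E (Walk.cons h₁ (q₁.takeUntil u huq)) = 0 := by
          apply ih ((Walk.cons h₁ (q₁.takeUntil u huq)).length) _ u _ rfl
          simp only [Walk.length_cons]
          omega
        have h2 : walkSum E (q₁.dropUntil u huq) = 0 := by
          apply ih ((q₁.dropUntil u huq).length) _ u _ rfl
          omega
        rw [← hsum, hw'', ← hw'', hsplit, h1, h2, add_zero]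

/-- `E` (vanishing on non-edges) satisfies the additive no-arbitrage condition over all
closed walks iff it is antisymmetric on edges and its sum vanishes over every cycle. -/
theorem no_arbitrage_iff_antisymm_and_cycles {V : Type*} (G : SimpleGraph V)
    (E : V → V → ℝ) (h0 : ∀ i j, ¬ G.Adj i j → E i j = 0) :
    (∀ (v : V) (w : G.Walk v v), walkSum E w = 0) ↔
      ((∀ i j, G.Adj i j → E i j = - E j i) ∧
        ∀ (v : V) (w : G.Walk v v), w.IsCycle → walkSum E w = 0) := by
  constructor
  · intro h
    refine ⟨fun i j hij => ?_, fun v w _ => h v w⟩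
    have := h i (SimpleGraph.Walk.cons hij (SimpleGraph.Walk.cons hij.symm SimpleGraph.Walk.nil))
    rw [walkSum_cons, walkSum_cons, walkSum_nil] at this
    linarith
  · rintro ⟨hA, hC⟩ v w
    exact walkSum_zero_of_closed E hA hC w.length v w rfl
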